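/- Let M ∈ ℝ^{n×n} and M_O ∈ ℝ^{p×p} be symmetric positive definite and G ∈ ℝ^{p×n} have full row rank. Then M⁻¹ + Gᵀ M_O⁻¹ G is invertible, and (I_n − M Gᵀ(G M Gᵀ)⁻¹ G)(M⁻¹ + Gᵀ M_O⁻¹ G)⁻¹ = (I_n − M Gᵀ(G M Gᵀ)⁻¹ G) M. -/

import Mathlib

open Matrix

theorem stmt19 {n p : ℕ} (M : Matrix (Fin n) (Fin n) ℝ) (hM : M.PosDef)
    (MO : Matrix (Fin p) (Fin p) ℝ) (hMO : MO.PosDef)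
    (G : Matrix (Fin p) (Fin n) ℝ) (hG : G.rank = p) :
    IsUnit (M⁻¹ + Gᵀ * MO⁻¹ * G) ∧
      ((1 : Matrix (Fin n) (Fin n) ℝ) - M * Gᵀ * (G * M * Gᵀ)⁻¹ * G) *
          (M⁻¹ + Gᵀ * MO⁻¹ * G)⁻¹ =
        ((1 : Matrix (Fin n) (Fin n) ℝ) - M * Gᵀ * (G * M * Gᵀ)⁻¹ * G) * M := by
  -- rows of G are linearly independent
  have hli : LinearIndependent ℝ (fun i ↦ G i) := by
    rw [linearIndependent_iff_card_eq_finrank_span]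
    rw [G.rank_eq_finrank_span_row] at hG
    simp [Set.finrank, ← hG]
    rfl
  -- Gᵀ mulVec injective
  have hinj : Function.Injective Gᵀ.mulVec := by
    rw [Matrix.mulVec_injective_iff]
    exact hli
  -- G M Gᵀ posdef
  have hGMG : (G * M * Gᵀ).PosDef := by
    have hherm : (G * M * Gᵀ).IsHermitian := by
      have := Matrix.isHermitian_conjTranspose_mul_mul Gᵀ hM.1
      simpa using this
    refine Matrix.PosDef.of_dotProduct_mulVec_pos hherm (fun x hx => ?_)
    have hx' : Gᵀ *ᵥ x ≠ 0 := fun h => hx (hinj (by simpa using h))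
    have hpos := hM.dotProduct_mulVec_pos hx'
    have e : x ⬝ᵥ (G * M * Gᵀ) *ᵥ x = (Gᵀ *ᵥ x) ⬝ᵥ M *ᵥ (Gᵀ *ᵥ x) := by
      rw [← Matrix.mulVec_mulVec, ← Matrix.mulVec_mulVec, Matrix.dotProduct_mulVec,
        ← Matrix.mulVec_transpose]
    simpa [star_trivial, e] using hpos
  -- A posdef
  have hA : (M⁻¹ + Gᵀ * MO⁻¹ * G).PosDef := by
    refine Matrix.PosDef.add_posSemidef hM.inv ?_
    have := (hMO.inv.posSemidef).mul_mul_conjTranspose_same Gᵀ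
    simpa using this
  have hAu : IsUnit (M⁻¹ + Gᵀ * MO⁻¹ * G) := hA.isUnit
  refine ⟨hAu, ?_⟩
  set P : Matrix (Fin n) (Fin n) ℝ :=
    (1 : Matrix (Fin n) (Fin n) ℝ) - M * Gᵀ * (G * M * Gᵀ)⁻¹ * G with hP
  have hPMG : P * M * Gᵀ = 0 := by
    have hd : IsUnit (G * M * Gᵀ).det := isUnit_iff_ne_zero.mpr hGMG.det_pos.ne'
    rw [hP]
    rw [Matrix.sub_mul, Matrix.sub_mul, Matrix.one_mul]
    rw [show M * Gᵀ * (G * M * Gᵀ)⁻¹ * G * M * Gᵀ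
        = M * Gᵀ * ((G * M * Gᵀ)⁻¹ * (G * M * Gᵀ)) by simp only [Matrix.mul_assoc]]
    rw [Matrix.nonsing_inv_mul _ hd, Matrix.mul_one, sub_self]
  have key : P * M * (M⁻¹ + Gᵀ * MO⁻¹ * G) = P := by
    rw [Matrix.mul_add]
    have hd : IsUnit M.det := isUnit_iff_ne_zero.mpr hM.det_pos.ne'
    have h1 : P * M * M⁻¹ = P := by
      rw [Matrix.mul_assoc, Matrix.mul_nonsing_inv _ hd, Matrix.mul_one]
    have h2 : P * M * (Gᵀ * MO⁻¹ * G) = 0 := by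
      rw [show P * M * (Gᵀ * MO⁻¹ * G) = P * M * Gᵀ * (MO⁻¹ * G) by simp only [Matrix.mul_assoc], hPMG,
        Matrix.zero_mul]
    rw [h1, h2, add_zero]
  calc P * (M⁻¹ + Gᵀ * MO⁻¹ * G)⁻¹
      = P * M * (M⁻¹ + Gᵀ * MO⁻¹ * G) * (M⁻¹ + Gᵀ * MO⁻¹ * G)⁻¹ := by rw [key]
    _ = P * M := by
        rw [Matrix.mul_assoc,
          Matrix.mul_nonsing_inv _ (isUnit_iff_ne_zero.mpr hA.det_pos.ne'), Matrix.mul_one]
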